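/- arXiv:0810.3090 — 4 statements merged into one kernel-verified Lean document; each statement's English description precedes it below -/
import Mathlib

section
/- Let X be a normed linear space modeled as above, with W a family of seminorms induced by bounded linear functionals. The quotient Fin(X)/𝔦, equipped with the norm ‖x + 𝔦‖ = sup_{p∈W} st(p(x)), is a well-defined normed space; moreover if the ultrafilter is countably incomplete (e.g. nonprincipal on ℕ) and W is countable, this quotient is a complete normed space (a Banach space). -/
open Filter

section WeakHullAux

open Hyperreal

variable {V : Type*} [NormedAddCommGroup V] [NormedSpace ℂ V]

/-- The `k`-th seminorm on the ultrapower, as a hyperreal. -/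
noncomputable def WHpk (φ : ℕ → (V →L[ℂ] ℂ)) (k : ℕ)
    (x : Germ (hyperfilter ℕ : Filter ℕ) V) : ℝ* :=
  Filter.Germ.map (fun v => ‖φ k v‖) x

variable (φ : ℕ → (V →L[ℂ] ℂ)) (k : ℕ)

theorem WHpk_coe (f : ℕ → V) : WHpk φ k ↑f = (↑(fun j => ‖φ k (f j)‖) : Germ _ ℝ) := rfl

theorem WHofReal_eq (c : ℝ) : ((c : ℝ*)) = (↑(fun _ : ℕ => c) : Germ _ ℝ) := rfl

theorem WHpk_nonneg (x : Germ (hyperfilter ℕ : Filter ℕ) V) : 0 ≤ WHpk φ k x := by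
  induction x using Germ.inductionOn with
  | h f =>
    rw [WHpk_coe, show (0:ℝ*) = (↑(fun _ : ℕ => (0:ℝ)) : Germ _ ℝ) from rfl]
    refine Germ.coe_le.mpr ?_
    exact Eventually.of_forall fun j => norm_nonneg _

theorem WHpk_add (x y : Germ (hyperfilter ℕ : Filter ℕ) V) :
    WHpk φ k (x + y) ≤ WHpk φ k x + WHpk φ k y := by
  induction x using Germ.inductionOn with
  | h f =>
    induction y using Germ.inductionOn with
    | h g =>
      rw [← Germ.coe_add, WHpk_coe, WHpk_coe, WHpk_coe]
      change ((↑(fun j => ‖φ k ((f + g) j)‖) : Germ (hyperfilter ℕ : Filter ℕ) ℝ) ≤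
        (↑(fun j => ‖φ k (f j)‖) : Germ (hyperfilter ℕ : Filter ℕ) ℝ) +
          (↑(fun j => ‖φ k (g j)‖) : Germ (hyperfilter ℕ : Filter ℕ) ℝ))
      rw [← Germ.coe_add, Germ.coe_le]
      exact Eventually.of_forall fun j => by
        simpa [map_add] using norm_add_le ((φ k) (f j)) ((φ k) (g j))

theorem WHpk_neg (x : Germ (hyperfilter ℕ : Filter ℕ) V) : WHpk φ k (-x) = WHpk φ k x := by
  induction x using Germ.inductionOn with
  | h f =>
    rw [← Germ.coe_neg, WHpk_coe, WHpk_coe]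
    exact Germ.coe_eq.mpr (Eventually.of_forall fun j => by simp)

theorem WHpk_zero : WHpk φ k (0 : Germ (hyperfilter ℕ : Filter ℕ) V) = 0 := by
  rw [show (0 : Germ (hyperfilter ℕ : Filter ℕ) V) = ↑(fun _ : ℕ => (0:V)) from rfl, WHpk_coe]
  rw [show (0:ℝ*) = (↑(fun _ : ℕ => (0:ℝ)) : Germ _ ℝ) from rfl]
  exact Germ.coe_eq.mpr (Eventually.of_forall fun j => by simp)

theorem WHpk_coe_sub (f g : ℕ → V) :
    WHpk φ k (↑f - ↑g) =
      (↑(fun j => ‖φ k (f j) - φ k (g j)‖) : Germ (hyperfilter ℕ : Filter ℕ) ℝ) := by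
  rw [← Germ.coe_sub, WHpk_coe]
  exact Germ.coe_eq.mpr (Eventually.of_forall fun j => by simp [Pi.sub_apply, map_sub])

theorem WHpk_le_const_iff (f g : ℕ → V) (c : ℝ) :
    WHpk φ k (↑f - ↑g) ≤ (c : ℝ*) ↔
      ∀ᶠ j in (hyperfilter ℕ : Filter ℕ), ‖φ k (f j) - φ k (g j)‖ ≤ c := by
  rw [WHpk_coe_sub, WHofReal_eq]
  exact Germ.coe_le

theorem WHnot_inf_of_bdd {d : ℝ*} (h0 : 0 ≤ d) {r : ℝ} (h : d ≤ (r : ℝ*)) :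
    ¬ d.Infinite := by
  rintro (hp | hn)
  · exact absurd (lt_of_lt_of_le (hp r) h) (lt_irrefl _)
  · exact absurd (lt_of_le_of_lt h0 (hn 0)) (by simp)

theorem WHst_nonneg {d : ℝ*} (hd : ¬ d.Infinite) (h0 : 0 ≤ d) : 0 ≤ st d :=
  (isSt_refl_real 0).le (isSt_st' hd) h0

theorem WHst_le_const {d : ℝ*} (hd : ¬ d.Infinite) {c : ℝ} (h : d ≤ (c : ℝ*)) : st d ≤ c :=
  (isSt_st' hd).le (isSt_refl_real c) h

theorem WHle_coe_of_st_lt {d : ℝ*} (hd : ¬ d.Infinite) {c : ℝ} (h : st d < c) : d ≤ (c : ℝ*) :=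
  (lt_of_st_lt hd (isSt_refl_real c).not_infinite (by rwa [st_id_real])).le

variable {FinS : Submodule ℂ (Germ (hyperfilter ℕ : Filter ℕ) V)}
variable (hFin : ∀ x : FinS, ∃ n : ℕ, ∀ k : ℕ,
  WHpk φ k (x : Germ (hyperfilter ℕ : Filter ℕ) V) ≤ ((n : ℝ) : ℝ*))

/-- The candidate norm on the finite part. -/
noncomputable def WHNN (x : FinS) : ℝ :=
  ⨆ k : ℕ, Hyperreal.st (WHpk φ k (x : Germ (hyperfilter ℕ : Filter ℕ) V))

include hFin

theorem WHnotInf (x : FinS) (k : ℕ) :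
    ¬ (WHpk φ k (x : Germ (hyperfilter ℕ : Filter ℕ) V)).Infinite := by
  obtain ⟨n, hn⟩ := hFin x
  exact WHnot_inf_of_bdd (WHpk_nonneg φ k _) (hn k)

theorem WHbdd (x : FinS) :
    BddAbove (Set.range fun k => st (WHpk φ k (x : Germ (hyperfilter ℕ : Filter ℕ) V))) := by
  obtain ⟨n, hn⟩ := hFin x
  refine ⟨(n : ℝ), ?_⟩
  rintro r ⟨k, rfl⟩
  exact WHst_le_const (WHnotInf φ hFin x k) (hn k)

theorem WHst_le_NN (x : FinS) (k : ℕ) :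
    st (WHpk φ k (x : Germ (hyperfilter ℕ : Filter ℕ) V)) ≤ WHNN φ x :=
  le_ciSup (WHbdd φ hFin x) k

theorem WHNN_nonneg (x : FinS) : 0 ≤ WHNN φ x :=
  le_trans (WHst_nonneg (WHnotInf φ hFin x 0) (WHpk_nonneg φ 0 _)) (WHst_le_NN φ hFin x 0)

theorem WHNN_add (x y : FinS) : WHNN φ (x + y) ≤ WHNN φ x + WHNN φ y := by
  apply ciSup_le
  intro k
  have e : ((x + y : FinS) : Germ (hyperfilter ℕ : Filter ℕ) V)
      = (x : Germ _ V) + (y : Germ _ V) := rfl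
  have h1 : st (WHpk φ k ((x + y : FinS) : Germ (hyperfilter ℕ : Filter ℕ) V))
      ≤ st (WHpk φ k (x : Germ (hyperfilter ℕ : Filter ℕ) V)
          + WHpk φ k (y : Germ (hyperfilter ℕ : Filter ℕ) V)) := by
    refine st_le_of_le (WHnotInf φ hFin (x + y) k)
      (not_infinite_add (WHnotInf φ hFin x k) (WHnotInf φ hFin y k)) ?_
    rw [e]
    exact WHpk_add φ k _ _
  have h2 := st_add (WHnotInf φ hFin x k) (WHnotInf φ hFin y k)
  refine le_trans h1 (le_trans (le_of_eq h2) ?_)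
  exact add_le_add (WHst_le_NN φ hFin x k) (WHst_le_NN φ hFin y k)

omit hFin

theorem WHNN_neg (x : FinS) : WHNN φ (-x) = WHNN φ x := by
  unfold WHNN
  congr 1
  funext k
  rw [show ((-x : FinS) : Germ (hyperfilter ℕ : Filter ℕ) V) = -(x : Germ _ V) from rfl,
    WHpk_neg]

theorem WHNN_zero : WHNN φ (0 : FinS) = 0 := by
  unfold WHNN
  have : ∀ k : ℕ, st (WHpk φ k ((0 : FinS) : Germ (hyperfilter ℕ : Filter ℕ) V)) = 0 := by
    intro k
    rw [show ((0 : FinS) : Germ (hyperfilter ℕ : Filter ℕ) V) = 0 from rfl, WHpk_zero]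
    exact st_id_real 0
  simp only [this, ciSup_const]

/-- The seminorm structure. -/
noncomputable def WHsem (hFin : ∀ x : FinS, ∃ n : ℕ, ∀ k : ℕ,
    WHpk φ k (x : Germ (hyperfilter ℕ : Filter ℕ) V) ≤ ((n : ℝ) : ℝ*)) :
    AddGroupSeminorm FinS where
  toFun := WHNN φ
  map_zero' := WHNN_zero φ
  add_le' := WHNN_add φ hFin
  neg' := WHNN_neg φ

end WeakHullAux

/-- Let `V` be a complex normed space, `X = Germ (hyperfilter ℕ) V` its ultrapower
along the (nonprincipal, hence countably incomplete) hyperfilter, and let `W` be a countable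
family of seminorms `p_φₖ(x) = |*φₖ(x)|` induced by bounded linear functionals `φₖ` of norm `≤ 1`.
Let `FinS` be the finite part and `IS` the monad of `0` with respect to `W`.  Then the quotient
`FinS ⧸ IS`, with norm `‖x + IS‖ = sup_k st(p_φₖ(x))`, is a well-defined normed space, and it is
complete, i.e. a Banach space. -/
theorem weak_hull_quotient_is_banach
    (V : Type*) [NormedAddCommGroup V] [NormedSpace ℂ V]
    (φ : ℕ → (V →L[ℂ] ℂ)) (hφ : ∀ k, ‖φ k‖ ≤ 1)
    (FinS IS : Submodule ℂ (Filter.Germ (Filter.hyperfilter ℕ : Filter ℕ) V))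
    (hFin : (FinS : Set (Filter.Germ (Filter.hyperfilter ℕ : Filter ℕ) V)) =
      {x | ∃ n : ℕ, ∀ k : ℕ,
        Filter.Germ.map (fun v => ‖φ k v‖) x ≤ ((n : ℝ) : Hyperreal)})
    (hI : (IS : Set (Filter.Germ (Filter.hyperfilter ℕ : Filter ℕ) V)) =
      {x | (∃ n : ℕ, ∀ k : ℕ,
          Filter.Germ.map (fun v => ‖φ k v‖) x ≤ ((n : ℝ) : Hyperreal)) ∧
        ∀ k : ℕ, ∀ m : ℕ, 0 < m →
          Filter.Germ.map (fun v => ‖φ k v‖) x ≤ ((1 / m : ℝ) : Hyperreal)}) :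
    ∃ inst : NormedAddCommGroup (FinS ⧸ (IS.comap FinS.subtype)),
      (∀ x : FinS, @norm _ inst.toNorm (Submodule.Quotient.mk x) =
        ⨆ k : ℕ, Hyperreal.st (Filter.Germ.map (fun v => ‖φ k v‖) (x : _))) ∧
      @CompleteSpace (FinS ⧸ (IS.comap FinS.subtype)) inst.toMetricSpace.toUniformSpace := by
  classical
  open Hyperreal in
  -- finiteness of members of `FinS`
  have hfin : ∀ x : FinS, ∃ n : ℕ, ∀ k : ℕ,
      WHpk φ k (x : Germ (hyperfilter ℕ : Filter ℕ) V) ≤ ((n : ℝ) : ℝ*) := by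
    intro x
    have hx : (x : Germ (hyperfilter ℕ : Filter ℕ) V) ∈ (FinS : Set _) := x.2
    rw [hFin] at hx
    exact hx
  have notInf := WHnotInf φ hfin
  -- the seminormed structure on FinS
  letI instS : SeminormedAddCommGroup FinS :=
    AddGroupSeminorm.toSeminormedAddCommGroup (WHsem φ hfin)
  have norm_def : ∀ x : FinS, ‖x‖ = WHNN φ x := fun _ => rfl
  set S : Submodule ℂ FinS := IS.comap FinS.subtype with hS
  -- membership in S
  have memS : ∀ x : FinS, x ∈ S ↔ ∀ k : ℕ,
      st (WHpk φ k (x : Germ (hyperfilter ℕ : Filter ℕ) V)) = 0 := by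
    intro x
    rw [hS, Submodule.mem_comap]
    have hsub : FinS.subtype x = (x : Germ (hyperfilter ℕ : Filter ℕ) V) := rfl
    rw [hsub, ← SetLike.mem_coe, hI]
    constructor
    · rintro ⟨-, h2⟩ k
      refine le_antisymm ?_ (WHst_nonneg (notInf x k) (WHpk_nonneg φ k _))
      by_contra hpos
      push_neg at hpos
      obtain ⟨n, hn⟩ := exists_nat_one_div_lt hpos
      have h3 := WHst_le_const (notInf x k) (h2 k (n + 1) (Nat.succ_pos n))
      have : ((1 : ℝ) / ((n : ℕ) + 1 : ℕ)) = 1 / ((n : ℝ) + 1) := by push_cast; ring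
      rw [this] at h3
      linarith
    · intro h
      refine ⟨hfin x, fun k m hm => ?_⟩
      refine WHle_coe_of_st_lt (notInf x k) ?_
      rw [h k]
      have : (0 : ℝ) < (m : ℝ) := by exact_mod_cast hm
      positivity
  have norm_zero_iff : ∀ x : FinS, ‖x‖ = 0 ↔ x ∈ S := by
    intro x
    rw [norm_def, memS]
    constructor
    · intro h k
      refine le_antisymm ?_ (WHst_nonneg (notInf x k) (WHpk_nonneg φ k _))
      rw [← h]
      exact WHst_le_NN φ hfin x k
    · intro h
      have : ∀ k : ℕ, st (WHpk φ k (x : Germ (hyperfilter ℕ : Filter ℕ) V)) = 0 := h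
      unfold WHNN
      simp only [this, ciSup_const]
  -- S is closed
  haveI hSclosed : IsClosed (S : Set FinS) := by
    have : (S : Set FinS) = {x | ‖x‖ ≤ 0} := by
      ext x
      simp only [Set.mem_setOf_eq, SetLike.mem_coe]
      constructor
      · intro h
        exact le_of_eq ((norm_zero_iff x).2 h)
      · intro h
        exact (norm_zero_iff x).1 (le_antisymm h (by rw [norm_def]; exact WHNN_nonneg φ hfin x))
    rw [this]
    exact isClosed_le continuous_norm continuous_const
  letI instQ : NormedAddCommGroup (FinS ⧸ S) := Submodule.Quotient.normedAddCommGroup S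
  refine ⟨instQ, ?_, ?_⟩
  · -- the norm formula
    intro x
    show ‖(Submodule.Quotient.mk x : FinS ⧸ S)‖ = WHNN φ x
    refine le_antisymm (Submodule.Quotient.norm_mk_le S x) ?_
    by_contra hcon
    push_neg at hcon
    obtain ⟨m, hm, hlt⟩ := Submodule.Quotient.norm_mk_lt
      (Submodule.Quotient.mk x : FinS ⧸ S) (show (0:ℝ) < (WHNN φ x - ‖(Submodule.Quotient.mk x : FinS ⧸ S)‖) / 2 by linarith)
    have hmem : m - x ∈ S := (Submodule.Quotient.eq S).1 hm
    have h0 : ‖m - x‖ = 0 := (norm_zero_iff _).2 hmem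
    have h1 : ‖x‖ - ‖m‖ ≤ ‖x - m‖ := norm_sub_norm_le x m
    have h2 : ‖x - m‖ = ‖m - x‖ := by rw [← norm_neg, neg_sub]
    have h3 : WHNN φ x ≤ ‖m‖ := by
      rw [← norm_def]
      rw [h2, h0] at h1
      linarith
    linarith
  · -- completeness
    haveI : CompleteSpace FinS := by
      apply Metric.complete_of_convergent_controlled_sequences
        (fun N => 1 / ((N : ℝ) + 1)) (fun N => by positivity)
      intro u hu
      -- choose representatives
      have hrep : ∀ n : ℕ, ∃ f : ℕ → V,
          (↑f : Germ (hyperfilter ℕ : Filter ℕ) V) = (u n : Germ _ V) := fun n =>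
        Germ.inductionOn (u n : Germ (hyperfilter ℕ : Filter ℕ) V) fun f => ⟨f, rfl⟩
      choose f hf using hrep
      -- hyperreal-level Cauchy control
      have key1 : ∀ m n : ℕ, m ≤ n → ∀ k : ℕ,
          WHpk φ k ((u n : Germ (hyperfilter ℕ : Filter ℕ) V) - (u m : Germ _ V))
            ≤ ((1 / ((m : ℝ) + 1) : ℝ) : ℝ*) := by
        intro m n hmn k
        have hd : dist (u n) (u m) < 1 / ((m : ℝ) + 1) := hu m n m hmn le_rfl
        have hdd : WHNN φ (u n - u m) < 1 / ((m : ℝ) + 1) := by rw [dist_eq_norm] at hd; exact hd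
        have h1 : st (WHpk φ k ((u n - u m : FinS) : Germ (hyperfilter ℕ : Filter ℕ) V))
            < 1 / ((m : ℝ) + 1) := lt_of_le_of_lt (WHst_le_NN φ hfin (u n - u m) k) hdd
        have h2 := WHle_coe_of_st_lt (notInf (u n - u m) k) h1
        exact h2
      -- the good sets
      set E : ℕ → Set ℕ := fun m => {j | ∀ i ∈ Set.Iic m, ∀ k ∈ Set.Iic m,
        ‖φ k (f m j) - φ k (f i j)‖ ≤ 1 / ((i : ℝ) + 1)} with hE
      have hEmem : ∀ m : ℕ, ∀ᶠ j in (hyperfilter ℕ : Filter ℕ), j ∈ E m := by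
        intro m
        simp only [hE, Set.mem_setOf_eq]
        rw [eventually_all_finite (Set.finite_Iic m)]
        intro i hi
        rw [eventually_all_finite (Set.finite_Iic m)]
        intro k hk
        have h1 := key1 i m hi k
        rw [← hf m, ← hf i] at h1
        exact (WHpk_le_const_iff φ k (f m) (f i) _).1 h1
      -- the diagonal sequence
      set M : ℕ → ℕ := fun j => Nat.findGreatest (fun m => j ∈ E m) j with hM
      set w : ℕ → V := fun j => f (M j) j with hw
      have key2 : ∀ m k : ℕ, ∀ᶠ j in (hyperfilter ℕ : Filter ℕ),
          ‖φ k (w j) - φ k (f m j)‖ ≤ 1 / ((m : ℝ) + 1) := by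
        intro m k
        have h1 := hEmem (max m k)
        have h2 : ∀ᶠ j in (hyperfilter ℕ : Filter ℕ), max m k ≤ j :=
          (eventually_ge_atTop (max m k)).filter_mono Nat.hyperfilter_le_atTop
        filter_upwards [h1, h2] with j hj1 hj2
        have hle : max m k ≤ M j := Nat.le_findGreatest (P := fun m => j ∈ E m) hj2 hj1
        have hspec : j ∈ E (M j) := Nat.findGreatest_spec (P := fun m => j ∈ E m) hj2 hj1
        exact hspec m (le_trans (le_max_left m k) hle) k (le_trans (le_max_right m k) hle)
      have key3 : ∀ m k : ℕ,
          WHpk φ k ((↑w : Germ (hyperfilter ℕ : Filter ℕ) V) - (u m : Germ _ V))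
            ≤ ((1 / ((m : ℝ) + 1) : ℝ) : ℝ*) := by
        intro m k
        rw [← hf m]
        exact (WHpk_le_const_iff φ k w (f m) _).2 (key2 m k)
      -- the limit lies in FinS
      obtain ⟨n0, hn0⟩ := hfin (u 0)
      have hwFin : (↑w : Germ (hyperfilter ℕ : Filter ℕ) V) ∈ FinS := by
        rw [← SetLike.mem_coe, hFin]
        refine ⟨n0 + 2, fun k => ?_⟩
        have h1 : WHpk φ k (↑w : Germ (hyperfilter ℕ : Filter ℕ) V)
            ≤ WHpk φ k ((↑w : Germ _ V) - (u 0 : Germ _ V)) + WHpk φ k ((u 0 : Germ _ V)) := by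
          have h := WHpk_add φ k
            ((↑w : Germ (hyperfilter ℕ : Filter ℕ) V) - (u 0 : Germ _ V)) ((u 0 : Germ _ V))
          rwa [sub_add_cancel] at h
        refine le_trans h1 (le_trans (add_le_add (α := ℝ*) (key3 0 k) (hn0 k)) ?_)
        rw [← Hyperreal.coe_add]
        apply Hyperreal.coe_le_coe.mpr
        push_cast
        linarith
      obtain ⟨W, hW⟩ : ∃ W : FinS, (W : Germ (hyperfilter ℕ : Filter ℕ) V) = ↑w :=
        ⟨⟨↑w, hwFin⟩, rfl⟩
      refine ⟨W, ?_⟩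
      rw [Metric.tendsto_atTop]
      intro δ hδ
      obtain ⟨N, hN⟩ := exists_nat_one_div_lt hδ
      refine ⟨N, fun n hn => ?_⟩
      have hdist : dist (u n) W ≤ 1 / ((n : ℝ) + 1) := by
        have hstep : ∀ k : ℕ,
            st (WHpk φ k ((u n - W : FinS) : Germ (hyperfilter ℕ : Filter ℕ) V))
              ≤ 1 / ((n : ℝ) + 1) := by
          intro k
          have hcoe : ((u n - W : FinS) : Germ (hyperfilter ℕ : Filter ℕ) V)
              = -( (↑w : Germ _ V) - (u n : Germ _ V)) := by
            show (u n : Germ (hyperfilter ℕ : Filter ℕ) V) - (W : Germ _ V) = _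
            rw [hW, neg_sub]
          have h2 : WHpk φ k ((u n - W : FinS) : Germ (hyperfilter ℕ : Filter ℕ) V)
              ≤ ((1 / ((n : ℝ) + 1) : ℝ) : ℝ*) := by
            rw [hcoe, WHpk_neg]
            exact key3 n k
          exact WHst_le_const (notInf (u n - W) k) h2
        have : WHNN φ (u n - W) ≤ 1 / ((n : ℝ) + 1) := ciSup_le hstep
        rw [dist_eq_norm]; exact this
      have hmono : (1 : ℝ) / ((n : ℝ) + 1) ≤ 1 / ((N : ℝ) + 1) := by
        apply one_div_le_one_div_of_le
        · positivity
        · have : (N : ℝ) ≤ (n : ℝ) := by exact_mod_cast hn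
          linarith
      exact lt_of_le_of_lt hdist (lt_of_le_of_lt hmono hN)
    exact Submodule.Quotient.completeSpace S
end

section
/- (Goldstine's Theorem) For any normed space X, the image of the closed unit ball of X under the canonical embedding into the bidual X'' is dense in the closed unit ball of X'' with respect to the weak-* topology σ(X'', X'). -/
open NormedSpace

/-- Every continuous linear functional on `WeakDual ℂ Y` is evaluation at some `φ : Y`. -/
lemma weakDual_dual_eval {Y : Type*} [NormedAddCommGroup Y] [NormedSpace ℂ Y]
    (f : WeakDual ℂ Y →L[ℂ] ℂ) : ∃ φ : Y, ∀ z : WeakDual ℂ Y, f z = z φ := by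
  set B := topDualPairing ℂ Y with hB
  have hcont : f ⁻¹' Metric.ball (0 : ℂ) 1 ∈ nhds (0 : WeakDual ℂ Y) := by
    have := f.continuous.tendsto (0 : WeakDual ℂ Y)
    simpa using this (Metric.ball_mem_nhds _ one_pos)
  obtain ⟨U, hU, hUsub⟩ := (LinearMap.hasBasis_weakBilin B).mem_iff.mp hcont
  obtain ⟨s, r, hr, rfl⟩ := (SeminormFamily.basisSets_iff _).mp hU
  -- if z vanishes on all of s then f z = 0
  have hker : ∀ z : WeakDual ℂ Y, (∀ i ∈ s, z i = 0) → f z = 0 := by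
    intro z hz
    by_contra hfz
    have hmem : ∀ c : ℂ, (c • z) ∈ Seminorm.ball (s.sup (B.toSeminormFamily)) 0 r := by
      intro c
      refine (Seminorm.mem_ball_zero _).mpr ?_
      apply Seminorm.finset_sup_apply_lt hr
      intro i hi
      show ‖(c • z) i‖ < r
      calc ‖(c • z) i‖ = ‖c * z i‖ := rfl
        _ = 0 := by rw [hz i hi, mul_zero, norm_zero]
        _ < r := hr
    have hlt : ∀ c : ℂ, ‖c‖ * ‖f z‖ < 1 := by
      intro c
      have := hUsub (hmem c)
      have h3 : f (c • z) ∈ Metric.ball (0 : ℂ) 1 := this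
      simpa [map_smul, norm_smul] using h3
    have h2 := hlt ((2 * ‖f z‖⁻¹ : ℝ) : ℂ)
    have hfz' : 0 < ‖f z‖ := norm_pos_iff.mpr hfz
    rw [Complex.norm_real] at h2
    have : |2 * ‖f z‖⁻¹| = 2 * ‖f z‖⁻¹ := abs_of_pos (by positivity)
    rw [Real.norm_eq_abs, this, mul_assoc, inv_mul_cancel₀ hfz'.ne'] at h2
    norm_num at h2
  -- so f is in the span of the evaluations at elements of s
  have hK : (⨅ i : s, LinearMap.ker (B.flip (i : Y))) ≤
      LinearMap.ker (f : WeakDual ℂ Y →ₗ[ℂ] ℂ) := by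
    intro z hz
    rw [Submodule.mem_iInf] at hz
    refine (LinearMap.mem_ker (f := (f : WeakDual ℂ Y →ₗ[ℂ] ℂ))).mpr (hker z fun i hi => ?_)
    exact hz ⟨i, hi⟩
  have hspan := mem_span_of_iInf_ker_le_ker hK
  obtain ⟨c, hc⟩ := (Submodule.mem_span_range_iff_exists_fun ℂ).mp hspan
  refine ⟨∑ i : s, c i • (i : Y), fun z => ?_⟩
  have := congrArg (fun g : WeakDual ℂ Y →ₗ[ℂ] ℂ => g z) hc
  replace this := (LinearMap.sum_apply Finset.univ (fun i : s => c i • B.flip (i : Y)) z).symm.trans this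
  rw [show f z = (f : WeakDual ℂ Y →ₗ[ℂ] ℂ) z from rfl, ← this, map_sum]
  refine Finset.sum_congr rfl fun i _ => ?_
  rw [map_smul]
  rfl

/-- Goldstine's theorem: for a normed space `X`, the image of the closed unit ball
of `X` under the canonical embedding `J : X → X''` is dense in the closed unit ball of `X''`
for the weak-* topology `σ(X'', X')`. -/
theorem goldstine
    (X : Type*) [NormedAddCommGroup X] [NormedSpace ℂ X] :
    (StrongDual.toWeakDual '' Metric.closedBall (0 : StrongDual ℂ (StrongDual ℂ X)) 1) ⊆
      closure ((fun x : X =>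
        StrongDual.toWeakDual (NormedSpace.inclusionInDoubleDual ℂ X x)) ''
          Metric.closedBall (0 : X) 1) := by
  rintro y ⟨x'', hx'', rfl⟩
  replace hx'' : ‖x''‖ ≤ 1 := le_of_eq_of_le (dist_zero_right x'').symm hx''
  by_contra hy
  set S := ((fun x : X =>
      StrongDual.toWeakDual (NormedSpace.inclusionInDoubleDual ℂ X x)) ''
        Metric.closedBall (0 : X) 1) with hS
  have hSconv : Convex ℝ (closure S) := by
    refine @Convex.closure ℝ (WeakDual ℂ (StrongDual ℂ X)) _ _ _ _ _ _ _ S ?_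
    have : Convex ℝ (Metric.closedBall (0 : X) 1) := convex_closedBall _ _
    exact this.is_linear_image
      ⟨fun a b => by simp [map_add], fun c a => by
        simp [map_smul]; rfl⟩
  haveI : LocallyConvexSpace ℝ (WeakDual ℂ (StrongDual ℂ X)) :=
    by have h := @WeakBilin.locallyConvexSpace ℂ (StrongDual ℂ (StrongDual ℂ X)) (StrongDual ℂ X) _ _ _ _ _ _ _ _ (topDualPairing ℂ (StrongDual ℂ X)); exact h
  haveI : IsScalarTower ℝ ℂ (WeakDual ℂ (StrongDual ℂ X)) :=
    inferInstanceAs (IsScalarTower ℝ ℂ (StrongDual ℂ X →L[ℂ] ℂ))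
  obtain ⟨f, u, hu, hux⟩ :=
    RCLike.geometric_hahn_banach_closed_point (𝕜 := ℂ) hSconv isClosed_closure hy
  obtain ⟨φ, hφ⟩ := weakDual_dual_eval f
  have heval : ∀ x : X, ‖x‖ ≤ 1 →
      Complex.re (φ x) < u := by
    intro x hx
    have hmem : StrongDual.toWeakDual (NormedSpace.inclusionInDoubleDual ℂ X x)
        ∈ closure S := subset_closure ⟨x, by simpa [Metric.mem_closedBall, dist_zero_right], rfl⟩
    have := hu _ hmem
    rwa [hφ] at this
  have hu0 : 0 < u := by
    have := heval 0 (by simp)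
    simpa using this
  have hφnorm : ‖φ‖ ≤ u := by
    have hball : ∀ x : X, ‖x‖ ≤ 1 → ‖φ x‖ ≤ u := by
      intro x hx
      rcases eq_or_ne (φ x) 0 with h | h
      · simp [h, hu0.le]
      · set c : ℂ := ‖φ x‖ / φ x with hc
        have hcnorm : ‖c‖ = 1 := by
          rw [hc, norm_div, Complex.norm_real, Real.norm_eq_abs, abs_of_nonneg (norm_nonneg _),
            div_self (norm_ne_zero_iff.mpr h)]
        have hφcx : φ (c • x) = (‖φ x‖ : ℂ) := by
          rw [map_smul, smul_eq_mul, hc, div_mul_cancel₀ _ h]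
        have := heval (c • x) (by rw [norm_smul, hcnorm, one_mul]; exact hx)
        rw [hφcx] at this
        simpa using this.le
    refine ContinuousLinearMap.opNorm_le_bound _ hu0.le fun x => ?_
    rcases eq_or_ne x 0 with rfl | hx0
    · simp
    · have hnx : (0 : ℝ) < ‖x‖ := norm_pos_iff.mpr hx0
      have := hball (((‖x‖⁻¹ : ℝ) : ℂ) • x) (by
        rw [norm_smul, Complex.norm_real, Real.norm_eq_abs, abs_of_pos (by positivity),
          inv_mul_cancel₀ hnx.ne'])
      rw [map_smul, smul_eq_mul, norm_mul, Complex.norm_real, Real.norm_eq_abs,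
        abs_of_pos (by positivity)] at this
      calc ‖φ x‖ = ‖x‖ * (‖x‖⁻¹ * ‖φ x‖) := by field_simp
        _ ≤ ‖x‖ * u := by
            exact mul_le_mul_of_nonneg_left (by simpa using this) hnx.le
        _ = u * ‖x‖ := mul_comm _ _
  have hfx : Complex.re (f (StrongDual.toWeakDual x'')) ≤ u := by
    rw [hφ]
    have h1 : ‖(StrongDual.toWeakDual x'' : StrongDual ℂ X → ℂ) φ‖ ≤ u := by
      calc ‖x'' φ‖ ≤ ‖x''‖ * ‖φ‖ := x''.le_opNorm φ
        _ ≤ 1 * u := mul_le_mul hx'' hφnorm (norm_nonneg _) zero_le_one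
        _ = u := one_mul u
    exact le_trans (Complex.re_le_norm _) h1
  exact absurd hfx (not_le.mpr hux)
end

section
/- (Helly's Theorem) Let X be a normed space, x'' ∈ X'' an element of the bidual, A ⊆ X' a finite set of bounded functionals, and ε > 0. Then there exists a ∈ X with ‖a‖ ≤ ‖x''‖ + ε and φ(a) = x''(φ) for every φ ∈ A. -/
open NormedSpace

/-- Helly's theorem: given `x''` in the bidual of a normed space `X`, a finite set
`A` of bounded functionals on `X` and `ε > 0`, there is `a ∈ X` with `‖a‖ ≤ ‖x''‖ + ε` and
`φ a = x'' φ` for every `φ ∈ A`. -/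
theorem helly
    (X : Type*) [NormedAddCommGroup X] [NormedSpace ℂ X]
    (x'' : StrongDual ℂ (StrongDual ℂ X)) (A : Finset (StrongDual ℂ X)) (ε : ℝ) (hε : 0 < ε) :
    ∃ a : X, ‖a‖ ≤ ‖x''‖ + ε ∧ ∀ φ ∈ A, φ a = x'' φ := by
  classical
  set L : A → (X →ₗ[ℂ] ℂ) := fun φ => ((φ : StrongDual ℂ X) : X →ₗ[ℂ] ℂ) with hLdef
  -- key computation: `x''` applied to a finite combination of functionals
  have key : ∀ c : A → ℂ,
      x'' (∑ i, c i • (i : StrongDual ℂ X)) = ∑ i, c i * x'' (i : StrongDual ℂ X) := by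
    intro c
    rw [map_sum]
    simp [smul_eq_mul]
  -- Step 1: there is `a0` interpolating all values
  set T : X →ₗ[ℂ] (A → ℂ) := LinearMap.pi L with hTdef
  have hc0 : (fun i : A => x'' (i : StrongDual ℂ X)) ∈ LinearMap.range T := by
    rw [← Subspace.forall_mem_dualAnnihilator_apply_eq_zero_iff]
    intro f hf
    rw [Submodule.mem_dualAnnihilator] at hf
    set lam : A → ℂ := fun i => f (Pi.single i 1) with hlam
    have hfc : ∀ v : A → ℂ, f v = ∑ i, v i * lam i := by
      intro v
      have hv : v = ∑ i, v i • (Pi.single i 1 : A → ℂ) := by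
        funext j
        simp [Finset.sum_apply, Pi.single_apply]
      conv_lhs => rw [hv]
      rw [map_sum]
      simp [smul_eq_mul, hlam]
    have hΨ : (∑ i, lam i • (i : StrongDual ℂ X)) = 0 := by
      ext a
      have h1 : f (T a) = 0 := hf (T a) ⟨a, rfl⟩
      rw [hfc (T a)] at h1
      simpa [hTdef, LinearMap.pi_apply, hLdef, mul_comm] using h1
    have h2 := key lam
    rw [hΨ, map_zero] at h2
    rw [hfc]
    rw [Finset.sum_congr rfl (fun i _ => mul_comm _ _)]
    exact h2.symm
  obtain ⟨a0, ha0⟩ := hc0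
  have ha0' : ∀ i : A, (i : StrongDual ℂ X) a0 = x'' (i : StrongDual ℂ X) := by
    intro i
    have := congrFun ha0 i
    simpa [hTdef, LinearMap.pi_apply, hLdef] using this
  -- Step 2: the subspace of common kernels
  set Y : Submodule ℂ X := ⨅ i : A, LinearMap.ker (L i) with hYdef
  haveI : IsClosed (Y : Set X) := by
    have hY : (Y : Set X) = ⋂ i : A, (LinearMap.ker (L i) : Set X) := by
      rw [hYdef]; exact Submodule.coe_iInf _
    rw [hY]
    exact isClosed_iInter fun i => ContinuousLinearMap.isClosed_ker (i : StrongDual ℂ X)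
  -- bound the quotient norm of `a0`
  have hb : ‖(Submodule.Quotient.mk a0 : X ⧸ Y)‖ ≤ ‖x''‖ := by
    apply norm_le_dual_bound ℂ _ (norm_nonneg x'')
    intro g
    set ψl : X →ₗ[ℂ] ℂ := g.toLinearMap.comp Y.mkQ with hψl
    have hψb : ∀ x : X, ‖ψl x‖ ≤ ‖g‖ * ‖x‖ := by
      intro x
      refine le_trans (g.le_opNorm _) ?_
      exact mul_le_mul_of_nonneg_left (Submodule.Quotient.norm_mk_le _ _) (norm_nonneg g)
    set ψ : StrongDual ℂ X := LinearMap.mkContinuous ψl ‖g‖ hψb with hψ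
    have hψnorm : ‖ψ‖ ≤ ‖g‖ := LinearMap.mkContinuous_norm_le _ (norm_nonneg g) _
    have hker : ⨅ i : A, LinearMap.ker (L i) ≤ LinearMap.ker ψl := by
      intro x hx
      have hx0 : (Submodule.Quotient.mk x : X ⧸ Y) = 0 :=
        (Submodule.Quotient.mk_eq_zero _).2 (by rwa [hYdef])
      simp [hψl, LinearMap.mem_ker, Submodule.mkQ_apply, hx0]
    obtain ⟨c, hc⟩ := (Submodule.mem_span_range_iff_exists_fun ℂ).1 (mem_span_of_iInf_ker_le_ker hker)
    have hψeq : ψ = ∑ i, c i • (i : StrongDual ℂ X) := by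
      ext a
      have := congrFun (congrArg (fun (m : X →ₗ[ℂ] ℂ) => (m : X → ℂ)) hc) a
      simp only [LinearMap.coe_sum, Finset.sum_apply, LinearMap.smul_apply,
        smul_eq_mul] at this
      simpa [hψ, hLdef, smul_eq_mul] using this.symm
    have h1 : ψ a0 = x'' ψ := by
      rw [hψeq, key c]
      simp only [ContinuousLinearMap.coe_sum', Finset.sum_apply,
        ContinuousLinearMap.coe_smul', Pi.smul_apply, smul_eq_mul]
      exact Finset.sum_congr rfl fun i _ => by rw [ha0' i]
    have h2 : g (Submodule.Quotient.mk a0) = ψ a0 := rfl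
    calc ‖g (Submodule.Quotient.mk a0)‖ = ‖x'' ψ‖ := by rw [h2, h1]
      _ ≤ ‖x''‖ * ‖ψ‖ := x''.le_opNorm ψ
      _ ≤ ‖x''‖ * ‖g‖ := mul_le_mul_of_nonneg_left hψnorm (norm_nonneg x'')
  obtain ⟨m, hm, hmlt⟩ :=
    Submodule.Quotient.norm_mk_lt (Submodule.Quotient.mk a0 : X ⧸ Y) hε
  refine ⟨m, le_trans hmlt.le (by linarith), ?_⟩
  intro φ hφ
  have hmem : m - a0 ∈ Y := (Submodule.Quotient.eq Y).1 hm
  have hk : (L ⟨φ, hφ⟩) (m - a0) = 0 := by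
    have hmem' : m - a0 ∈ ⨅ i : A, LinearMap.ker (L i) := by rwa [hYdef] at hmem
    exact (Submodule.mem_iInf (fun i : A => LinearMap.ker (L i))).1 hmem' ⟨φ, hφ⟩
  have hφm : φ m = φ a0 := by
    have h3 : φ (m - a0) = 0 := hk
    rw [map_sub] at h3
    exact sub_eq_zero.1 h3
  rw [hφm]
  exact ha0' ⟨φ, hφ⟩
end

section
/- With π : A'' → B(H) as above, the image π(A'') is closed under operator composition: for F, G ∈ A'' there exists C ∈ A'' with π(C) = π(F) ∘ π(G); C is determined by C(ω_{ξ,ρ}|_A) = ⟨π(F)(π(G)ρ), ξ⟩ for all ξ, ρ ∈ H. -/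
open scoped InnerProductSpace

/-- with `π : A'' → B(H)` determined by `⟨ξ, π(F) η⟩ = F(ω_{ξ,η}|_A)`, the image
of `π` is closed under operator composition: for `F, G ∈ A''` there is `C ∈ A''` with
`π(C) = π(F) ∘ π(G)`; `C` is determined on the vector functionals by
`C(ω_{ξ,η}|_A) = ⟨ξ, π(F)(π(G) η)⟩` for all `ξ, η ∈ H`. -/
theorem pi_image_closed_under_composition
    (A : Type*) [CStarAlgebra A]
    (H : Type*) [NormedAddCommGroup H] [InnerProductSpace ℂ H] [CompleteSpace H]
    (ρu : A →⋆ₐ[ℂ] (H →L[ℂ] H)) (hρu : Isometry ρu)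
    (omegaA : H → H → StrongDual ℂ A)
    (homega : ∀ ξ η : H, ∀ x : A, omegaA ξ η x = ⟪ξ, ρu x η⟫_ℂ)
    (hcomb : ∀ φ : StrongDual ℂ A, ∃ (m : ℕ) (ξ η : Fin m → H) (c : Fin m → ℂ),
      φ = ∑ k : Fin m, c k • omegaA (ξ k) (η k))
    (π : StrongDual ℂ (StrongDual ℂ A) → (H →L[ℂ] H))
    (hπ : ∀ F, ∀ ξ η : H, ⟪ξ, π F η⟫_ℂ = F (omegaA ξ η)) :
    ∀ F G : StrongDual ℂ (StrongDual ℂ A),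
      ∃ C : StrongDual ℂ (StrongDual ℂ A),
        π C = (π F).comp (π G) ∧
        ∀ ξ η : H, C (omegaA ξ η) = ⟪ξ, π F (π G η)⟫_ℂ := by
  intro F G
  classical
  set M := ContinuousLinearMap.mul ℂ A with hM
  -- T φ is the functional x ↦ G (y ↦ φ (x * y))
  set Tfun : StrongDual ℂ A → StrongDual ℂ A :=
    fun φ => G.comp ((ContinuousLinearMap.compL ℂ A A ℂ φ).comp M) with hT
  have hTapply : ∀ φ x, Tfun φ x = G (φ.comp (M x)) := fun φ x => rfl
  -- key identity: T (ω ξ η) = ω ξ (π G η)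
  have hkey : ∀ ξ η : H, Tfun (omegaA ξ η) = omegaA ξ (π G η) := by
    intro ξ η
    ext x
    have h1 : (omegaA ξ η).comp (M x)
        = omegaA ((ContinuousLinearMap.adjoint (ρu x)) ξ) η := by
      ext y
      simp only [ContinuousLinearMap.comp_apply, hM, ContinuousLinearMap.mul_apply']
      rw [homega, homega, map_mul, ContinuousLinearMap.mul_apply,
        ContinuousLinearMap.adjoint_inner_left]
    rw [hTapply, h1, ← hπ G, ContinuousLinearMap.adjoint_inner_left, homega]
  -- norm bound for T
  have hTnorm : ∀ φ : StrongDual ℂ A, ‖Tfun φ‖ ≤ ‖G‖ * ‖φ‖ := by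
    intro φ
    refine ContinuousLinearMap.opNorm_le_bound _ (by positivity) fun x => ?_
    rw [hTapply]
    calc ‖G (φ.comp (M x))‖ ≤ ‖G‖ * ‖φ.comp (M x)‖ := G.le_opNorm _
      _ ≤ ‖G‖ * (‖φ‖ * ‖M x‖) :=
        mul_le_mul_of_nonneg_left (ContinuousLinearMap.opNorm_comp_le _ _) (norm_nonneg G)
      _ ≤ ‖G‖ * (‖φ‖ * ‖x‖) := by
        refine mul_le_mul_of_nonneg_left
          (mul_le_mul_of_nonneg_left ?_ (norm_nonneg _)) (norm_nonneg G)
        exact ContinuousLinearMap.opNorm_mul_apply_le ℂ A x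
      _ = ‖G‖ * ‖φ‖ * ‖x‖ := by ring
  -- the composite functional C = F ∘ T
  have hTadd : ∀ φ ψ, Tfun (φ + ψ) = Tfun φ + Tfun ψ := by
    intro φ ψ; ext x; simp [hTapply]
  have hTsmul : ∀ (c : ℂ) φ, Tfun (c • φ) = c • Tfun φ := by
    intro c φ; ext x; simp [hTapply]
  let C : StrongDual ℂ (StrongDual ℂ A) :=
    LinearMap.mkContinuous
      { toFun := fun φ => F (Tfun φ)
        map_add' := fun φ ψ => by show F (Tfun (φ + ψ)) = F (Tfun φ) + F (Tfun ψ); rw [hTadd, map_add]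
        map_smul' := fun c φ => by show F (Tfun (c • φ)) = c • F (Tfun φ); rw [hTsmul, map_smul] }
      (‖F‖ * ‖G‖)
      (by
        intro φ
        calc ‖F (Tfun φ)‖ ≤ ‖F‖ * ‖Tfun φ‖ := F.le_opNorm _
          _ ≤ ‖F‖ * (‖G‖ * ‖φ‖) :=
            mul_le_mul_of_nonneg_left (hTnorm φ) (norm_nonneg F)
          _ = ‖F‖ * ‖G‖ * ‖φ‖ := by ring)
  have hCω : ∀ ξ η : H, C (omegaA ξ η) = ⟪ξ, π F (π G η)⟫_ℂ := by
    intro ξ η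
    show F (Tfun (omegaA ξ η)) = _
    rw [hkey, ← hπ F]
  refine ⟨C, ?_, hCω⟩
  ext η
  apply ext_inner_left ℂ
  intro ξ
  rw [hπ C, hCω]
  rfl
end
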